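/- Under the alternating proximal scheme x_{n+1} = argmin_x 𝓕(x) + 𝓖(u_n,x) + η_n‖x−x_n‖², u_{n+1} = argmin_u 𝓖(u,x_{n+1}) + ℋ^f(u) + ν_n‖u−u_n‖², with η_n, ν_n ∈ (a,b), 0 < a < b, the objective 𝒥^f(u,x) = 𝓕(x) + 𝓖(u,x) + ℋ^f(u) is non-increasing along iterates: 𝒥^f(u_{n+1}, x_{n+1}) ≤ 𝒥^f(u_n, x_n), with equality if and only if x_{n+1} = x_n and u_{n+1} = u_n; moreover Σ_n (‖x_{n+1}−x_n‖² + ‖u_{n+1}−u_n‖²) < ∞ when 𝒥^f is bounded below. -/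

import Mathlib

/-- Descent property of the alternating proximal scheme: the objective
`𝒥^f(u,x) = 𝓕(x) + 𝓖(u,x) + ℋ^f(u)` is non-increasing along the iterates, with
equality iff the iterates are stationary, and the squared successive differences
are summable when `𝒥^f` is bounded below. -/
theorem alternating_prox_descent
    {X U : Type*}
    [NormedAddCommGroup X] [InnerProductSpace ℝ X] [FiniteDimensional ℝ X]
    [NormedAddCommGroup U] [InnerProductSpace ℝ U] [FiniteDimensional ℝ U]
    (F : X → EReal) (G : U × X → ℝ) (H : U → EReal)
    (hFbot : ∀ x, F x ≠ ⊥) (hFproper : ∃ x, F x ≠ ⊤)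
    (hFlsc : LowerSemicontinuous F)
    (hFbdd : ∃ c : ℝ, ∀ x, (c : EReal) ≤ F x)
    (hFcoer : ∀ M : ℝ, ∃ R : ℝ, ∀ x : X, R ≤ ‖x‖ → (M : EReal) ≤ F x)
    (hG : ContDiff ℝ 1 G)
    (hHbot : ∀ u, H u ≠ ⊥) (hHproper : ∃ u, H u ≠ ⊤)
    (hHlsc : LowerSemicontinuous H)
    (hHbdd : ∃ c : ℝ, ∀ u, (c : EReal) ≤ H u)
    (a b : ℝ) (ha : 0 < a) (hab : a < b)
    (η ν : ℕ → ℝ) (hη : ∀ n, η n ∈ Set.Ioo a b) (hν : ∀ n, ν n ∈ Set.Ioo a b)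
    (x : ℕ → X) (u : ℕ → U)
    (J : U × X → EReal) (hJ : ∀ p, J p = F p.2 + (G p : EReal) + H p.1)
    (hx : ∀ n, ∀ x' : X,
      F (x (n+1)) + (G (u n, x (n+1)) : EReal)
          + ((η n * ‖x (n+1) - x n‖^2 : ℝ) : EReal)
        ≤ F x' + (G (u n, x') : EReal) + ((η n * ‖x' - x n‖^2 : ℝ) : EReal))
    (hu : ∀ n, ∀ u' : U,
      (G (u (n+1), x (n+1)) : EReal) + H (u (n+1))
          + ((ν n * ‖u (n+1) - u n‖^2 : ℝ) : EReal)
        ≤ (G (u', x (n+1)) : EReal) + H u' + ((ν n * ‖u' - u n‖^2 : ℝ) : EReal)) :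
    (∀ n, J (u (n+1), x (n+1)) ≤ J (u n, x n) ∧
      (J (u (n+1), x (n+1)) = J (u n, x n) ↔ x (n+1) = x n ∧ u (n+1) = u n)) ∧
    ((∃ L : ℝ, ∀ p : U × X, (L : EReal) ≤ J p) →
      Summable (fun n => ‖x (n+1) - x n‖^2 + ‖u (n+1) - u n‖^2)) := by
  obtain ⟨x₀, hx₀⟩ := hFproper
  obtain ⟨u₀, hu₀⟩ := hHproper
  have hη0 : ∀ n, 0 < η n := fun n => ha.trans (hη n).1
  have hν0 : ∀ n, 0 < ν n := fun n => ha.trans (hν n).1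
  -- finiteness of F and H along the iterates (indices ≥ 1)
  have hFtop : ∀ n, F (x (n+1)) ≠ ⊤ := by
    intro n hFt
    have h := hx n x₀
    rw [hFt, EReal.top_add_coe, EReal.top_add_coe] at h
    exact (not_le_of_gt (EReal.add_lt_top (EReal.add_lt_top hx₀ (EReal.coe_ne_top _)).ne
      (EReal.coe_ne_top _))) h
  have hHtop : ∀ n, H (u (n+1)) ≠ ⊤ := by
    intro n hHt
    have h := hu n u₀
    rw [hHt, EReal.coe_add_top, EReal.top_add_coe] at h
    exact (not_le_of_gt (EReal.add_lt_top (EReal.add_lt_top (EReal.coe_ne_top _) hu₀).ne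
      (EReal.coe_ne_top _))) h
  -- the key descent inequality
  have key : ∀ n, J (u (n+1), x (n+1))
      + ((η n * ‖x (n+1) - x n‖^2 + ν n * ‖u (n+1) - u n‖^2 : ℝ) : EReal)
      ≤ J (u n, x n) := by
    intro n
    have h1 := hx n (x n)
    have h2 := hu n (u n)
    simp only [sub_self, norm_zero, ne_eq, OfNat.ofNat_ne_zero, not_false_eq_true, zero_pow,
      mul_zero, EReal.coe_zero, add_zero] at h1 h2
    rw [hJ, hJ]
    calc F (u (n+1), x (n+1)).2 + (G (u (n+1), x (n+1)) : EReal) + H (u (n+1), x (n+1)).1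
          + ((η n * ‖x (n+1) - x n‖^2 + ν n * ‖u (n+1) - u n‖^2 : ℝ) : EReal)
        = (F (x (n+1)) + ((η n * ‖x (n+1) - x n‖^2 : ℝ) : EReal))
            + ((G (u (n+1), x (n+1)) : EReal) + H (u (n+1))
              + ((ν n * ‖u (n+1) - u n‖^2 : ℝ) : EReal)) := by
          push_cast; abel
      _ ≤ (F (x (n+1)) + ((η n * ‖x (n+1) - x n‖^2 : ℝ) : EReal))
            + ((G (u n, x (n+1)) : EReal) + H (u n)) := add_le_add le_rfl h2
      _ = (F (x (n+1)) + (G (u n, x (n+1)) : EReal) + ((η n * ‖x (n+1) - x n‖^2 : ℝ) : EReal))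
            + H (u n) := by abel
      _ ≤ (F (x n) + (G (u n, x n) : EReal)) + H (u n) := add_le_add h1 le_rfl
      _ = F (u n, x n).2 + (G (u n, x n) : EReal) + H (u n, x n).1 := by abel
  -- J along iterates (indices ≥ 1) is a real number
  set j : ℕ → ℝ := fun n => (J (u (n+1), x (n+1))).toReal with hj
  have hJc : ∀ n, J (u (n+1), x (n+1)) = ((j n : ℝ) : EReal) := by
    intro n
    have hnt : J (u (n+1), x (n+1)) ≠ ⊤ := by
      rw [hJ]
      exact (EReal.add_lt_top
        (EReal.add_lt_top (hFtop n) (EReal.coe_ne_top _)).ne (hHtop n)).ne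
    have hnb : J (u (n+1), x (n+1)) ≠ ⊥ := by
      rw [hJ]
      simp [EReal.add_eq_bot_iff, hFbot, hHbot]
    exact (EReal.coe_toReal hnt hnb).symm
  have keyR : ∀ n, j (n+1)
      + (η (n+1) * ‖x (n+2) - x (n+1)‖^2 + ν (n+1) * ‖u (n+2) - u (n+1)‖^2) ≤ j n := by
    intro n
    have h := key (n+1)
    rw [hJc (n+1), hJc n, ← EReal.coe_add, EReal.coe_le_coe_iff] at h
    exact h
  constructor
  · intro n
    have hc0 : 0 ≤ η n * ‖x (n+1) - x n‖^2 + ν n * ‖u (n+1) - u n‖^2 :=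
      add_nonneg (mul_nonneg (hη0 n).le (pow_nonneg (norm_nonneg _) 2))
        (mul_nonneg (hν0 n).le (pow_nonneg (norm_nonneg _) 2))
    constructor
    · exact le_trans (le_add_of_nonneg_right (by exact_mod_cast hc0)) (key n)
    · constructor
      · intro heq
        have hk := key n
        rw [← heq, hJc n, ← EReal.coe_add, EReal.coe_le_coe_iff] at hk
        have hc : η n * ‖x (n+1) - x n‖^2 + ν n * ‖u (n+1) - u n‖^2 ≤ 0 := by linarith
        have hxn : ‖x (n+1) - x n‖^2 = 0 := by
          nlinarith [pow_nonneg (norm_nonneg (x (n+1) - x n)) 2,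
            pow_nonneg (norm_nonneg (u (n+1) - u n)) 2, hη0 n, hν0 n,
            mul_nonneg (hν0 n).le (pow_nonneg (norm_nonneg (u (n+1) - u n)) 2),
            mul_nonneg (hη0 n).le (pow_nonneg (norm_nonneg (x (n+1) - x n)) 2)]
        have hun : ‖u (n+1) - u n‖^2 = 0 := by
          nlinarith [pow_nonneg (norm_nonneg (x (n+1) - x n)) 2,
            pow_nonneg (norm_nonneg (u (n+1) - u n)) 2, hη0 n, hν0 n,
            mul_nonneg (hν0 n).le (pow_nonneg (norm_nonneg (u (n+1) - u n)) 2),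
            mul_nonneg (hη0 n).le (pow_nonneg (norm_nonneg (x (n+1) - x n)) 2)]
        refine ⟨sub_eq_zero.mp ?_, sub_eq_zero.mp ?_⟩
        · exact norm_eq_zero.mp (pow_eq_zero_iff two_ne_zero |>.mp hxn)
        · exact norm_eq_zero.mp (pow_eq_zero_iff two_ne_zero |>.mp hun)
      · rintro ⟨h1, h2⟩
        rw [h1, h2]
  · rintro ⟨L, hL⟩
    set c : ℕ → ℝ := fun m => η m * ‖x (m+1) - x m‖^2 + ν m * ‖u (m+1) - u m‖^2 with hcdef
    set d : ℕ → ℝ := fun m => ‖x (m+1) - x m‖^2 + ‖u (m+1) - u m‖^2 with hddef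
    have hc0 : ∀ m, 0 ≤ c m := fun m =>
      add_nonneg (mul_nonneg (hη0 m).le (pow_nonneg (norm_nonneg _) 2))
        (mul_nonneg (hν0 m).le (pow_nonneg (norm_nonneg _) 2))
    have hd0 : ∀ m, 0 ≤ d m := fun m =>
      add_nonneg (pow_nonneg (norm_nonneg _) 2) (pow_nonneg (norm_nonneg _) 2)
    have hjL : ∀ n, L ≤ j n := by
      intro n
      have h := hL (u (n+1), x (n+1))
      rw [hJc n, EReal.coe_le_coe_iff] at h
      exact h
    have htel : ∀ N, ∑ k ∈ Finset.range N, c (k+1) ≤ j 0 - j N := by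
      intro N
      induction N with
      | zero => simp
      | succ N ih =>
        rw [Finset.sum_range_succ]
        have := keyR N
        simp only [hcdef] at *
        linarith
    have hcs : Summable (fun k => c (k+1)) :=
      summable_of_sum_range_le (c := j 0 - L) (fun k => hc0 (k+1))
        (fun N => (htel N).trans (by linarith [hjL N]))
    have hds : Summable (fun k => d (k+1)) := by
      refine Summable.of_nonneg_of_le (fun k => hd0 (k+1)) (fun k => ?_) (hcs.mul_left a⁻¹)
      have had : a * d (k+1) ≤ c (k+1) := by
        simp only [hcdef, hddef]
        have h1 : a * ‖x (k+2) - x (k+1)‖^2 ≤ η (k+1) * ‖x (k+2) - x (k+1)‖^2 :=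
          mul_le_mul_of_nonneg_right (hη (k+1)).1.le (pow_nonneg (norm_nonneg _) 2)
        have h2 : a * ‖u (k+2) - u (k+1)‖^2 ≤ ν (k+1) * ‖u (k+2) - u (k+1)‖^2 :=
          mul_le_mul_of_nonneg_right (hν (k+1)).1.le (pow_nonneg (norm_nonneg _) 2)
        calc a * (‖x (k+2) - x (k+1)‖^2 + ‖u (k+2) - u (k+1)‖^2)
            = a * ‖x (k+2) - x (k+1)‖^2 + a * ‖u (k+2) - u (k+1)‖^2 := by ring
          _ ≤ _ := add_le_add h1 h2
      have := mul_le_mul_of_nonneg_left had (inv_nonneg.2 ha.le)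
      rwa [inv_mul_cancel_left₀ ha.ne'] at this
    exact (summable_nat_add_iff 1).mp hds
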